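/- If |x'|² + (1 + δ' − xₙ)² + (C̃δ' − v)² = 1 with 0 ≤ −v ≤ Axₙ, xₙ ∈ [0, 1/2], δ' ∈ [0, δ₀], C̃ ≥ 1, and δ₀ sufficiently small, then xₙ ≤ A'δ' for a constant A' depending only on A and C̃. -/

import Mathlib

/-- Elementary estimate from the reflection argument: if a graph point satisfies the sphere
condition `|x'|² + (1+δ'-xₙ)² + (C̃δ'-v)² = 1`, lies in the ball `B_{1/2}(0,…,0,1/2,0)`
(so `|x'|² + (1/2-xₙ)² + v² ≤ 1/4`), and `0 ≤ -v ≤ A xₙ`, `xₙ ∈ [0,1/2]`, `δ' ∈ [0,δ₀]`,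
`C̃ ≥ 1`, then for `δ₀` sufficiently small `xₙ ≤ A' δ'` with `A'` depending only on
`A` and `C̃`. -/
theorem stmt17 (A Ct : ℝ) (hA : 0 ≤ A) (hCt : 1 ≤ Ct) :
    ∃ δ₀ > (0:ℝ), ∃ A' > (0:ℝ), ∀ (k : ℕ) (x' : Fin k → ℝ) (xn v δ' : ℝ),
      (∑ i, (x' i) ^ 2) + (1 + δ' - xn) ^ 2 + (Ct * δ' - v) ^ 2 = 1 →
      (∑ i, (x' i) ^ 2) + (1 / 2 - xn) ^ 2 + v ^ 2 ≤ 1 / 4 →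
      0 ≤ -v → -v ≤ A * xn →
      0 ≤ xn → xn ≤ 1 / 2 →
      0 ≤ δ' → δ' ≤ δ₀ →
      xn ≤ A' * δ' := by
  have hCt0 : (0:ℝ) < Ct := lt_of_lt_of_le one_pos hCt
  have hden : (0:ℝ) < 4 * Ct * (A + 1) := by positivity
  refine ⟨min 1 (1 / (4 * Ct * (A + 1))), lt_min one_pos (by positivity),
    2 * (3 + Ct ^ 2), by nlinarith, ?_⟩
  intro k x' xn v δ' heq hball hv1 hv2 hx0 hx1 hd0 hd1
  have hs : 0 ≤ ∑ i, (x' i) ^ 2 := Finset.sum_nonneg fun i _ => sq_nonneg _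
  have hd1a : δ' ≤ 1 := le_trans hd1 (min_le_left _ _)
  have hd1b : 4 * Ct * (A + 1) * δ' ≤ 1 := by
    have := le_trans hd1 (min_le_right _ _)
    rw [le_div_iff₀ hden] at this
    linarith [this]
  -- from the sphere equation minus the ball inequality:
  -- xn (1 + 2δ') ≤ 2δ' + δ'² + Ct²δ'² - 2 Ct δ' v
  have e1 := mul_le_mul_of_nonneg_left hv2 (mul_nonneg (by norm_num : (0:ℝ) ≤ 2) (mul_nonneg hCt0.le hd0))
  have e2 := mul_le_mul_of_nonneg_right hd1b hx0
  have e3 := mul_le_mul_of_nonneg_left hd1a (mul_nonneg hd0 (sq_nonneg Ct))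
  have e4 := mul_le_mul_of_nonneg_left hd1a hd0
  have e5 := mul_nonneg hd0 hx0
  have e6 : 0 ≤ A * xn := mul_nonneg hA hx0
  have e7 := mul_nonneg (mul_nonneg hCt0.le hd0) e6
  nlinarith [e1, e2, e3, e4, e5, e7]
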